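/- Let m : A → [0,∞) be null-additive and monotone and A ∈ A an atom of m. If f : T → X is m-totally-measurable on A, then f is Gould m-integrable on A. -/

import Mathlib

open Set ENNReal

variable {T : Type*}

/-- `𝒜` is an algebra of subsets of `T`. -/
def IsSetAlgebra' (𝒜 : Set (Set T)) : Prop :=
  ∅ ∈ 𝒜 ∧ (∀ A ∈ 𝒜, Aᶜ ∈ 𝒜) ∧ ∀ A ∈ 𝒜, ∀ B ∈ 𝒜, A ∪ B ∈ 𝒜

/-- `m` is monotone on `𝒜`. -/
def MonoSF (m : Set T → ℝ) (𝒜 : Set (Set T)) : Prop :=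
  ∀ A ∈ 𝒜, ∀ B ∈ 𝒜, A ⊆ B → m A ≤ m B

/-- `m` is subadditive on `𝒜`. -/
def SubaddSF (m : Set T → ℝ) (𝒜 : Set (Set T)) : Prop :=
  ∀ A ∈ 𝒜, ∀ B ∈ 𝒜, m (A ∪ B) ≤ m A + m B

/-- `m` is null-additive on `𝒜`. -/
def NullAddSF (m : Set T → ℝ) (𝒜 : Set (Set T)) : Prop :=
  ∀ A ∈ 𝒜, ∀ B ∈ 𝒜, m B = 0 → m (A ∪ B) = m A

/-- `m` is finitely additive on `𝒜`. -/
def FinAddSF (m : Set T → ℝ) (𝒜 : Set (Set T)) : Prop :=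
  ∀ A ∈ 𝒜, ∀ B ∈ 𝒜, Disjoint A B → m (A ∪ B) = m A + m B

/-- The variation `m̄` of `m`: supremum of `Σᵢ m(Aᵢ)` over finite pairwise disjoint
families `{Aᵢ} ⊆ 𝒜` with each `Aᵢ ⊆ E`. -/
noncomputable def variationSF (m : Set T → ℝ) (𝒜 : Set (Set T)) (E : Set T) : ℝ≥0∞ :=
  ⨆ F ∈ {F : Finset (Set T) |
      (∀ A ∈ F, A ∈ 𝒜 ∧ A ⊆ E) ∧ (F : Set (Set T)).PairwiseDisjoint id},
    ∑ A ∈ F, ENNReal.ofReal (m A)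

/-- `A` is an atom of `m`. -/
def IsAtomOf (m : Set T → ℝ) (𝒜 : Set (Set T)) (A : Set T) : Prop :=
  A ∈ 𝒜 ∧ 0 < m A ∧ ∀ B ∈ 𝒜, B ⊆ A → m B = 0 ∨ m (A \ B) = 0

/-- A partition of `A` into nonvoid pairwise disjoint members of `𝒜`. -/
def IsPartitionOf (𝒜 : Set (Set T)) (A : Set T) (P : Finset (Set T)) : Prop :=
  (∀ B ∈ P, B ∈ 𝒜 ∧ B.Nonempty ∧ B ⊆ A) ∧
  (P : Set (Set T)).PairwiseDisjoint id ∧ ⋃₀ (P : Set (Set T)) = A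

/-- `Q` is finer than `P`. -/
def RefinesPart (P Q : Finset (Set T)) : Prop := ∀ B ∈ Q, ∃ C ∈ P, B ⊆ C

/-- `f` is `m`-totally-measurable on `B`. -/
def TotallyMeasurableOn {X : Type*} [NormedAddCommGroup X] (m : Set T → ℝ)
    (𝒜 : Set (Set T)) (f : T → X) (B : Set T) : Prop :=
  ∀ ε > 0, ∃ A₀ : Set T, ∃ F : Finset (Set T),
    A₀ ∈ 𝒜 ∧ A₀ ⊆ B ∧ (∀ C ∈ F, C ∈ 𝒜 ∧ C.Nonempty ∧ C ⊆ B) ∧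
    (insert A₀ (F : Set (Set T))).PairwiseDisjoint id ∧
    A₀ ∪ ⋃₀ (F : Set (Set T)) = B ∧
    variationSF m 𝒜 A₀ < ENNReal.ofReal ε ∧
    ∀ C ∈ F, ∀ t ∈ C, ∀ s ∈ C, ‖f t - f s‖ < ε

variable {X : Type*} [NormedAddCommGroup X] [NormedSpace ℝ X]

/-- `f` has Gould integral `α` on `A` w.r.t. `m`: the net of Riemann sums
`σ(P) = Σ_{B ∈ P} m(B) • f(t_B)` over tagged partitions of `A`, ordered by
refinement, converges to `α`. -/
def HasGouldIntegralOn (m : Set T → ℝ) (𝒜 : Set (Set T)) (f : T → X) (A : Set T)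
    (α : X) : Prop :=
  ∀ ε > 0, ∃ P₀, IsPartitionOf 𝒜 A P₀ ∧ ∀ P, IsPartitionOf 𝒜 A P → RefinesPart P₀ P →
    ∀ τ : Set T → T, (∀ B ∈ P, τ B ∈ B) →
      ‖(∑ B ∈ P, m B • f (τ B)) - α‖ < ε

/-- `f` is Gould `m`-integrable on `A`. -/
def GouldIntegrableOn (m : Set T → ℝ) (𝒜 : Set (Set T)) (f : T → X) (A : Set T) : Prop :=
  ∃ α, HasGouldIntegralOn m 𝒜 f A α

section Aux

variable {𝒜 : Set (Set T)} {m : Set T → ℝ}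

lemma aux_alg_inter (halg : IsSetAlgebra' 𝒜) {A B : Set T}
    (hA : A ∈ 𝒜) (hB : B ∈ 𝒜) : A ∩ B ∈ 𝒜 := by
  have h := halg.2.1 _ (halg.2.2 Aᶜ (halg.2.1 A hA) Bᶜ (halg.2.1 B hB))
  rwa [Set.compl_union, compl_compl, compl_compl] at h

lemma aux_alg_diff (halg : IsSetAlgebra' 𝒜) {A B : Set T}
    (hA : A ∈ 𝒜) (hB : B ∈ 𝒜) : A \ B ∈ 𝒜 := by
  rw [Set.diff_eq]; exact aux_alg_inter halg hA (halg.2.1 B hB)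

lemma aux_null_sUnion (halg : IsSetAlgebra' 𝒜) (h0 : m ∅ = 0) (hnull : NullAddSF m 𝒜)
    (S : Finset (Set T)) (h : ∀ B ∈ S, B ∈ 𝒜) :
    ⋃₀ (S : Set (Set T)) ∈ 𝒜 ∧ ((∀ B ∈ S, m B = 0) → m (⋃₀ (S : Set (Set T))) = 0) := by
  classical
  induction S using Finset.induction_on with
  | empty => simpa using ⟨halg.1, h0⟩
  | @insert a S ha ih =>
    have h' : ∀ B ∈ S, B ∈ 𝒜 := fun B hB => h B (Finset.mem_insert_of_mem hB)
    obtain ⟨ih1, ih2⟩ := ih h'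
    have ha𝒜 : a ∈ 𝒜 := h a (Finset.mem_insert_self a S)
    rw [Finset.coe_insert, Set.sUnion_insert]
    refine ⟨halg.2.2 a ha𝒜 _ ih1, fun hz => ?_⟩
    have hz' : m (⋃₀ (S : Set (Set T))) = 0 :=
      ih2 fun B hB => hz B (Finset.mem_insert_of_mem hB)
    rw [hnull a ha𝒜 _ ih1 hz']
    exact hz a (Finset.mem_insert_self a S)

lemma aux_exists_essential (halg : IsSetAlgebra' 𝒜) (h0 : m ∅ = 0)
    (hpos : ∀ A ∈ 𝒜, 0 ≤ m A) (hnull : NullAddSF m 𝒜) (hmono : MonoSF m 𝒜)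
    {A : Set T} (hA : IsAtomOf m 𝒜 A)
    (S : Finset (Set T)) (h1 : ∀ B ∈ S, B ∈ 𝒜 ∧ B ⊆ A)
    (h2 : (S : Set (Set T)).PairwiseDisjoint id)
    (h3 : ⋃₀ (S : Set (Set T)) = A) :
    ∃ B ∈ S, m B = m A ∧ m (A \ B) = 0 ∧ ∀ C ∈ S, C ≠ B → m C = 0 := by
  obtain ⟨hA𝒜, hApos, hatom⟩ := hA
  have hex : ∃ B ∈ S, m B ≠ 0 := by
    by_contra h
    push_neg at h
    have := (aux_null_sUnion halg h0 hnull S fun B hB => (h1 B hB).1).2 h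
    rw [h3] at this
    linarith
  obtain ⟨B, hBS, hBne⟩ := hex
  have hB𝒜 := (h1 B hBS).1
  have hBA := (h1 B hBS).2
  have hBnull : m (A \ B) = 0 := by
    rcases hatom B hB𝒜 hBA with h | h
    · exact absurd h hBne
    · exact h
  have hAB𝒜 : A \ B ∈ 𝒜 := aux_alg_diff halg hA𝒜 hB𝒜
  have hBm : m B = m A := by
    have : m (B ∪ A \ B) = m B := hnull B hB𝒜 _ hAB𝒜 hBnull
    rw [Set.union_diff_cancel hBA] at this
    exact this.symm
  refine ⟨B, hBS, hBm, hBnull, fun C hCS hCB => ?_⟩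
  have hC𝒜 := (h1 C hCS).1
  have hCsub : C ⊆ A \ B := by
    have hd : Disjoint C B := h2 hCS hBS hCB
    intro x hx
    exact ⟨(h1 C hCS).2 hx, fun hxB => (Set.disjoint_left.mp hd hx) hxB⟩
  have := hmono C hC𝒜 _ hAB𝒜 hCsub
  have := hpos C hC𝒜
  linarith

lemma aux_inter_nonempty (halg : IsSetAlgebra' 𝒜) (h0 : m ∅ = 0)
    (hnull : NullAddSF m 𝒜) {A : Set T} (hA𝒜 : A ∈ 𝒜) (hApos : 0 < m A)
    {B C : Set T} (hB : B ∈ 𝒜) (hC : C ∈ 𝒜) (hBA : B ⊆ A)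
    (hBn : m (A \ B) = 0) (hCn : m (A \ C) = 0) : (B ∩ C).Nonempty := by
  have hBC : B ∩ C ∈ 𝒜 := aux_alg_inter halg hB hC
  have hd𝒜 : A \ (B ∩ C) ∈ 𝒜 := aux_alg_diff halg hA𝒜 hBC
  have hdz : m (A \ (B ∩ C)) = 0 := by
    rw [Set.diff_inter,
      hnull (A \ B) (aux_alg_diff halg hA𝒜 hB) (A \ C) (aux_alg_diff halg hA𝒜 hC) hCn]
    exact hBn
  have hmA : m A = m (B ∩ C) := by
    conv_lhs => rw [← Set.union_diff_cancel (Set.inter_subset_left.trans hBA : B ∩ C ⊆ A)]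
    exact hnull _ hBC _ hd𝒜 hdz
  rw [Set.nonempty_iff_ne_empty]
  intro h
  rw [h, h0] at hmA
  linarith

lemma aux_var_bound (hpos : ∀ A ∈ 𝒜, 0 ≤ m A) {A₀ : Set T} (hA₀ : A₀ ∈ 𝒜) {δ : ℝ}
    (hδ : 0 < δ) (h : variationSF m 𝒜 A₀ < ENNReal.ofReal δ) : m A₀ < δ := by
  classical
  have hmem : ({A₀} : Finset (Set T)) ∈ {F : Finset (Set T) |
      (∀ A ∈ F, A ∈ 𝒜 ∧ A ⊆ A₀) ∧ (F : Set (Set T)).PairwiseDisjoint id} := by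
    constructor
    · intro B hB
      rw [Finset.mem_singleton] at hB
      subst hB
      exact ⟨hA₀, subset_rfl⟩
    · simp
  have hle : ENNReal.ofReal (m A₀) ≤ variationSF m 𝒜 A₀ := by
    have := le_iSup₂ (f := fun (F : Finset (Set T))
        (_ : F ∈ {F : Finset (Set T) |
          (∀ A ∈ F, A ∈ 𝒜 ∧ A ⊆ A₀) ∧ (F : Set (Set T)).PairwiseDisjoint id}) =>
        ∑ A ∈ F, ENNReal.ofReal (m A)) ({A₀} : Finset (Set T)) hmem
    simpa [variationSF] using this
  have := lt_of_le_of_lt hle h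
  rwa [ENNReal.ofReal_lt_ofReal_iff hδ] at this

lemma aux_exists_ess_set {X : Type*} [NormedAddCommGroup X]
    (halg : IsSetAlgebra' 𝒜) (h0 : m ∅ = 0)
    (hpos : ∀ A ∈ 𝒜, 0 ≤ m A) (hnull : NullAddSF m 𝒜) (hmono : MonoSF m 𝒜)
    {A : Set T} (hA : IsAtomOf m 𝒜 A) {f : T → X}
    (hmeas : TotallyMeasurableOn m 𝒜 f A) :
    ∀ ε > 0, ∃ B, B ∈ 𝒜 ∧ B ⊆ A ∧ B.Nonempty ∧ m (A \ B) = 0 ∧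
      ∀ s ∈ B, ∀ s' ∈ B, ‖f s - f s'‖ < ε := by
  classical
  intro ε hε
  obtain ⟨hA𝒜, hApos, hatom⟩ := hA
  set δ := min ε (m A / 2) with hδdef
  have hδpos : 0 < δ := lt_min hε (by linarith)
  obtain ⟨A₀, F, hA₀𝒜, hA₀sub, hF, hdisj, hcover, hvar, hosc⟩ := hmeas δ hδpos
  have hA₀small : m A₀ < δ := aux_var_bound hpos hA₀𝒜 hδpos hvar
  have h1 : ∀ B ∈ insert A₀ F, B ∈ 𝒜 ∧ B ⊆ A := by
    intro B hB
    rcases Finset.mem_insert.mp hB with h | h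
    · subst h; exact ⟨hA₀𝒜, hA₀sub⟩
    · exact ⟨(hF B h).1, (hF B h).2.2⟩
  have h2 : ((insert A₀ F : Finset (Set T)) : Set (Set T)).PairwiseDisjoint id := by
    rwa [Finset.coe_insert]
  have h3 : ⋃₀ ((insert A₀ F : Finset (Set T)) : Set (Set T)) = A := by
    rw [Finset.coe_insert, Set.sUnion_insert]; exact hcover
  obtain ⟨B, hBS, hBm, hBnull, -⟩ :=
    aux_exists_essential halg h0 hpos hnull hmono ⟨hA𝒜, hApos, hatom⟩ _ h1 h2 h3
  have hBF : B ∈ F := by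
    rcases Finset.mem_insert.mp hBS with h | h
    · subst h
      exfalso
      have : δ ≤ m A / 2 := min_le_right _ _
      linarith
    · exact h
  refine ⟨B, (hF B hBF).1, (hF B hBF).2.2, (hF B hBF).2.1, hBnull, fun s hs s' hs' => ?_⟩
  exact lt_of_lt_of_le (hosc B hBF s hs s' hs') (min_le_left _ _)

end Aux

/-- If `m` is null-additive and monotone and `A` is an atom, total measurability of
`f` on `A` implies Gould integrability of `f` on `A`. -/
theorem gould_integrable_on_atom_of_totallyMeasurable [CompleteSpace X]
    (𝒜 : Set (Set T)) (m : Set T → ℝ)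
    (halg : IsSetAlgebra' 𝒜) (h0 : m ∅ = 0) (hpos : ∀ A ∈ 𝒜, 0 ≤ m A)
    (hnull : NullAddSF m 𝒜) (hmono : MonoSF m 𝒜)
    (A : Set T) (hA : IsAtomOf m 𝒜 A) (f : T → X)
    (hmeas : TotallyMeasurableOn m 𝒜 f A) :
    GouldIntegrableOn m 𝒜 f A := by
  classical
  obtain ⟨hA𝒜, hApos, hatom⟩ := hA
  have key := aux_exists_ess_set halg h0 hpos hnull hmono ⟨hA𝒜, hApos, hatom⟩ hmeas
  -- a sequence of essential sets with shrinking oscillation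
  have Hseq : ∀ n : ℕ, ∃ B, B ∈ 𝒜 ∧ B ⊆ A ∧ B.Nonempty ∧ m (A \ B) = 0 ∧
      ∀ s ∈ B, ∀ s' ∈ B, ‖f s - f s'‖ < 1 / (n + 1) := fun n => key _ (by positivity)
  choose B hB𝒜 hBsub hBne hBnull hBosc using Hseq
  choose t ht using hBne
  -- the tagged values form a Cauchy sequence
  have hcau : CauchySeq fun n => f (t n) := by
    rw [Metric.cauchySeq_iff']
    intro ε hε
    obtain ⟨N, hN⟩ := exists_nat_one_div_lt (show (0 : ℝ) < ε / 2 by linarith)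
    refine ⟨N, fun n hn => ?_⟩
    obtain ⟨s, hs1, hs2⟩ := aux_inter_nonempty halg h0 hnull hA𝒜 hApos (hB𝒜 n) (hB𝒜 N)
      (hBsub n) (hBnull n) (hBnull N)
    have h1 := hBosc n (t n) (ht n) s hs1
    have h2 := hBosc N s hs2 (t N) (ht N)
    have htri := dist_triangle (f (t n)) (f s) (f (t N))
    simp only [dist_eq_norm] at htri ⊢
    have hmono' : 1 / ((n : ℝ) + 1) ≤ 1 / ((N : ℝ) + 1) := by
      apply one_div_le_one_div_of_le
      · positivity
      · exact_mod_cast Nat.succ_le_succ hn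
    have hN' : 1 / ((N : ℝ) + 1) < ε / 2 := by exact_mod_cast hN
    linarith
  obtain ⟨L, hL⟩ := cauchySeq_tendsto_of_complete hcau
  refine ⟨m A • L, fun ε hε => ?_⟩
  set ε' := min (ε / (m A + 1)) (m A / 2) with hε'def
  have hε'pos : 0 < ε' := lt_min (by positivity) (by linarith)
  obtain ⟨A₀, F, hA₀𝒜, hA₀sub, hF, hdisj, hcover, hvar, hosc⟩ := hmeas ε' hε'pos
  have hA₀small : m A₀ < ε' := aux_var_bound hpos hA₀𝒜 hε'pos hvar
  set P₀ := (insert A₀ F).filter (fun s => s.Nonempty) with hP₀def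
  have hmemP₀ : ∀ C : Set T, C ∈ P₀ ↔ C ∈ insert A₀ F ∧ C.Nonempty := by
    intro C
    rw [hP₀def, Finset.mem_filter]
  have hP₀sub : ∀ C ∈ P₀, C ∈ insert A₀ F ∧ C.Nonempty := fun C hC => (hmemP₀ C).mp hC
  have hP₀ : IsPartitionOf 𝒜 A P₀ := by
    refine ⟨?_, ?_, ?_⟩
    · intro C hC
      obtain ⟨hC1, hC2⟩ := hP₀sub C hC
      rcases Finset.mem_insert.mp hC1 with h | h
      · subst h; exact ⟨hA₀𝒜, hC2, hA₀sub⟩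
      · exact ⟨(hF C h).1, hC2, (hF C h).2.2⟩
    · apply hdisj.subset
      intro x hx
      have : x ∈ insert A₀ F := ((hmemP₀ x).mp (Finset.mem_coe.mp hx)).1
      rwa [← Finset.coe_insert, Finset.mem_coe]
    · ext x
      rw [Set.mem_sUnion]
      constructor
      · rintro ⟨s, hs, hxs⟩
        have hs' := (hmemP₀ s).mp (Finset.mem_coe.mp hs)
        rcases Finset.mem_insert.mp hs'.1 with h | h
        · subst h
          rw [← hcover]; exact Or.inl hxs
        · rw [← hcover]
          exact Or.inr ⟨s, h, hxs⟩
      · intro hx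
        rw [← hcover] at hx
        rcases hx with hx | hx
        · exact ⟨A₀, Finset.mem_coe.mpr ((hmemP₀ A₀).mpr
            ⟨Finset.mem_insert_self _ _, ⟨x, hx⟩⟩), hx⟩
        · obtain ⟨s, hs, hxs⟩ := hx
          exact ⟨s, Finset.mem_coe.mpr ((hmemP₀ s).mpr
            ⟨Finset.mem_insert_of_mem (Finset.mem_coe.mp hs), ⟨x, hxs⟩⟩), hxs⟩
  refine ⟨P₀, hP₀, fun P hP href τ hτ => ?_⟩
  obtain ⟨Bs, hBsP, hBsm, hBsnull, hother⟩ :=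
    aux_exists_essential halg h0 hpos hnull hmono ⟨hA𝒜, hApos, hatom⟩ P
      (fun C hC => ⟨(hP.1 C hC).1, (hP.1 C hC).2.2⟩) hP.2.1 hP.2.2
  have hsum : (∑ C ∈ P, m C • f (τ C)) = m A • f (τ Bs) := by
    rw [Finset.sum_eq_single_of_mem Bs hBsP
      (fun C hC hne => by rw [hother C hC hne, zero_smul]), hBsm]
  obtain ⟨C, hCP₀, hBsC⟩ := href Bs hBsP
  have hC' : C ∈ insert A₀ F := (hP₀sub C hCP₀).1
  have hεhalf : ε' ≤ m A / 2 := min_le_right _ _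
  have hCF : C ∈ F := by
    rcases Finset.mem_insert.mp hC' with h | h
    · exfalso
      have hle : m Bs ≤ m A₀ := hmono Bs (hP.1 Bs hBsP).1 A₀ hA₀𝒜 (h ▸ hBsC)
      rw [hBsm] at hle
      linarith
    · exact h
  have hC𝒜 := (hF C hCF).1
  have hCnull : m (A \ C) = 0 := by
    rcases hatom C hC𝒜 (hF C hCF).2.2 with h | h
    · exfalso
      have hle : m Bs ≤ m C := hmono Bs (hP.1 Bs hBsP).1 C hC𝒜 hBsC
      rw [hBsm, h] at hle
      linarith
    · exact h
  have hτC : τ Bs ∈ C := hBsC (hτ Bs hBsP)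
  have hbound : ‖f (τ Bs) - L‖ ≤ ε' := by
    have h1 : Filter.Tendsto (fun n => ‖f (τ Bs) - f (t n)‖) Filter.atTop
        (nhds ‖f (τ Bs) - L‖) := (Filter.Tendsto.const_sub _ hL).norm
    have h2 : Filter.Tendsto (fun n : ℕ => ε' + 1 / ((n : ℝ) + 1)) Filter.atTop (nhds ε') := by
      have : Filter.Tendsto (fun n : ℕ => 1 / ((n : ℝ) + 1)) Filter.atTop (nhds 0) :=
        tendsto_one_div_add_atTop_nhds_zero_nat
      simpa using Filter.Tendsto.add (tendsto_const_nhds (x := ε')) this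
    refine le_of_tendsto_of_tendsto' h1 h2 fun n => ?_
    obtain ⟨s, hs1, hs2⟩ := aux_inter_nonempty halg h0 hnull hA𝒜 hApos hC𝒜 (hB𝒜 n)
      (hF C hCF).2.2 hCnull (hBnull n)
    have hb1 := hosc C hCF (τ Bs) hτC s hs1
    have hb2 := hBosc n s hs2 (t n) (ht n)
    have htri := dist_triangle (f (τ Bs)) (f s) (f (t n))
    simp only [dist_eq_norm] at htri
    linarith
  rw [hsum, ← smul_sub (m A) (f (τ Bs)) L, norm_smul, Real.norm_eq_abs, abs_of_pos hApos]
  have hfin : m A * ε' < ε := by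
    have h4 : ε' ≤ ε / (m A + 1) := min_le_left _ _
    have h5 : m A * ε' ≤ m A * (ε / (m A + 1)) :=
      mul_le_mul_of_nonneg_left h4 hApos.le
    have h6 : m A * (ε / (m A + 1)) < ε := by
      rw [mul_div_assoc', div_lt_iff₀ (by linarith)]
      nlinarith
    linarith
  calc m A * ‖f (τ Bs) - L‖ ≤ m A * ε' := mul_le_mul_of_nonneg_left hbound hApos.le
    _ < ε := hfin
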